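/- arXiv:math/0302348 — 4 statements merged into one kernel-verified Lean document; each statement's English description precedes it below -/
import Mathlib

section
/- Let ψ : [0,∞) → [0,∞) be convex, continuously differentiable, with ψ(0) = 0, and suppose there is a constant A > 0 such that ψ'(2x) ≤ A·ψ'(x) for all x > 0. Then for all x, y ≥ 0: ψ(x+y) − ψ(x) − ψ(y) ≤ A·( x·ψ'(y) + y·ψ'(x) ). -/
open Set

/-- Auxiliary: nonnegativity of the derivative. -/
lemma povzner_deriv_nonneg
    (ψ ψ' : ℝ → ℝ)
    (hconv : ConvexOn ℝ (Set.Ici (0 : ℝ)) ψ)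
    (hnonneg : ∀ x ∈ Set.Ici (0 : ℝ), 0 ≤ ψ x)
    (hψ0 : ψ 0 = 0)
    (hderiv : ∀ x ∈ Set.Ici (0 : ℝ), HasDerivWithinAt ψ (ψ' x) (Set.Ici (0 : ℝ)) x)
    (t : ℝ) (ht : 0 ≤ t) : 0 ≤ ψ' t := by
  rcases eq_or_lt_of_le ht with h | h
  · -- t = 0 : derivative is a limit of nonnegative slopes
    subst h
    have h0 := hderiv 0 Set.self_mem_Ici
    rw [hasDerivWithinAt_iff_tendsto_slope] at h0
    have hset : Set.Ici (0:ℝ) \ {0} = Set.Ioi 0 := Set.Ici_sdiff_left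
    rw [hset] at h0
    refine ge_of_tendsto h0 ?_
    filter_upwards [self_mem_nhdsWithin] with s hs
    rw [slope_def_field]
    have hs' : (0:ℝ) < s := hs
    have := hnonneg s hs'.le
    have : 0 ≤ (ψ s - ψ 0) / (s - 0) := by
      apply div_nonneg <;> simp [hψ0] <;> linarith
    linarith [this]
  · -- t > 0 : slope from 0 to t is nonnegative and bounds ψ' t above? below
    have hslope := hconv.slope_le_of_hasDerivWithinAt Set.self_mem_Ici (le_of_lt h) h
      (hderiv t (le_of_lt h))
    have : slope ψ 0 t = (ψ t - ψ 0) / (t - 0) := slope_def_field ψ 0 t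
    rw [this] at hslope
    have hnn : 0 ≤ (ψ t - ψ 0) / (t - 0) := by
      apply div_nonneg
      · have := hnonneg t (le_of_lt h); linarith [hψ0 ▸ this]
      · linarith
    linarith

/-- Auxiliary: monotonicity of the derivative of a convex function. -/
lemma povzner_deriv_mono
    (ψ ψ' : ℝ → ℝ)
    (hconv : ConvexOn ℝ (Set.Ici (0 : ℝ)) ψ)
    (hderiv : ∀ x ∈ Set.Ici (0 : ℝ), HasDerivWithinAt ψ (ψ' x) (Set.Ici (0 : ℝ)) x)
    (a b : ℝ) (ha : 0 ≤ a) (hab : a ≤ b) : ψ' a ≤ ψ' b := by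
  rcases eq_or_lt_of_le hab with h | h
  · subst h; exact le_refl _
  · have hb : 0 ≤ b := le_trans ha (le_of_lt h)
    have h1 := hconv.le_slope_of_hasDerivWithinAt ha hb h (hderiv a ha)
    have h2 := hconv.slope_le_of_hasDerivWithinAt ha hb h (hderiv b hb)
    exact le_trans h1 h2

/-- Auxiliary: the main inequality in the case `0 ≤ x ≤ y`. -/
lemma povzner_upper_aux
    (ψ ψ' : ℝ → ℝ)
    (hconv : ConvexOn ℝ (Set.Ici (0 : ℝ)) ψ)
    (hnonneg : ∀ x ∈ Set.Ici (0 : ℝ), 0 ≤ ψ x)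
    (hψ0 : ψ 0 = 0)
    (hderiv : ∀ x ∈ Set.Ici (0 : ℝ), HasDerivWithinAt ψ (ψ' x) (Set.Ici (0 : ℝ)) x)
    (A : ℝ) (hA : 0 < A)
    (hdoub : ∀ x : ℝ, 0 < x → ψ' (2 * x) ≤ A * ψ' x)
    (x y : ℝ) (hx : 0 ≤ x) (hy : 0 ≤ y) (hxy : x ≤ y) :
    ψ (x + y) - ψ x - ψ y ≤ A * (x * ψ' y + y * ψ' x) := by
  have hψ'x := povzner_deriv_nonneg ψ ψ' hconv hnonneg hψ0 hderiv x hx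
  have hψ'y := povzner_deriv_nonneg ψ ψ' hconv hnonneg hψ0 hderiv y hy
  rcases eq_or_lt_of_le hx with h0 | hxpos
  · -- x = 0
    subst h0
    simp only [zero_add, hψ0]
    have : (0:ℝ) ≤ A * (0 * ψ' y + y * ψ' 0) := by positivity
    linarith
  · -- x > 0, so y > 0
    have hypos : 0 < y := lt_of_lt_of_le hxpos hxy
    have hxy' : y < x + y := by linarith
    have hxyS : (0:ℝ) ≤ x + y := by linarith
    have hslope := hconv.slope_le_of_hasDerivWithinAt hy hxyS hxy'
      (hderiv (x + y) hxyS)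
    rw [slope_def_field] at hslope
    have h1 : ψ (x + y) - ψ y ≤ x * ψ' (x + y) := by
      have hx' : (0:ℝ) < x + y - y := by linarith
      calc ψ (x + y) - ψ y = ((ψ (x + y) - ψ y) / (x + y - y)) * (x + y - y) := by
            field_simp
        _ ≤ ψ' (x + y) * (x + y - y) := by
            apply mul_le_mul_of_nonneg_right hslope (le_of_lt hx')
        _ = x * ψ' (x + y) := by ring
    have h2 : ψ' (x + y) ≤ ψ' (2 * y) :=
      povzner_deriv_mono ψ ψ' hconv hderiv (x + y) (2 * y) hxyS (by linarith)
    have h3 : ψ' (2 * y) ≤ A * ψ' y := hdoub y hypos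
    have hψx := hnonneg x hx
    have : ψ (x + y) - ψ x - ψ y ≤ x * (A * ψ' y) := by
      have : x * ψ' (x + y) ≤ x * (A * ψ' y) := by
        apply mul_le_mul_of_nonneg_left (le_trans h2 h3) hx
      linarith
    have hrest : 0 ≤ A * (y * ψ' x) := by positivity
    nlinarith

/-- Upper Povzner-type inequality for a convex `C¹` function `ψ : [0,∞) → [0,∞)`
with `ψ(0) = 0` and doubling condition `ψ'(2x) ≤ A ψ'(x)`:
`ψ(x+y) − ψ(x) − ψ(y) ≤ A (x ψ'(y) + y ψ'(x))`. -/
theorem povzner_upper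
    (ψ ψ' : ℝ → ℝ)
    (hconv : ConvexOn ℝ (Set.Ici (0 : ℝ)) ψ)
    (hnonneg : ∀ x ∈ Set.Ici (0 : ℝ), 0 ≤ ψ x)
    (hψ0 : ψ 0 = 0)
    (hderiv : ∀ x ∈ Set.Ici (0 : ℝ), HasDerivWithinAt ψ (ψ' x) (Set.Ici (0 : ℝ)) x)
    (hcont : ContinuousOn ψ' (Set.Ici (0 : ℝ)))
    (A : ℝ) (hA : 0 < A)
    (hdoub : ∀ x : ℝ, 0 < x → ψ' (2 * x) ≤ A * ψ' x)
    (x y : ℝ) (hx : 0 ≤ x) (hy : 0 ≤ y) :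
    ψ (x + y) - ψ x - ψ y ≤ A * (x * ψ' y + y * ψ' x) := by
  rcases le_total x y with h | h
  · exact povzner_upper_aux ψ ψ' hconv hnonneg hψ0 hderiv A hA hdoub x y hx hy h
  · have := povzner_upper_aux ψ ψ' hconv hnonneg hψ0 hderiv A hA hdoub y x hy hx h
    have e : y + x = x + y := by ring
    rw [e] at this
    linarith
end

section
/- Let ψ : [0,∞) → [0,∞) be convex, continuously differentiable, twice differentiable on (0,∞), with ψ(0) = 0, and suppose there is a constant E > 0 such that ψ''(a x) ≤ E·ψ''(x) for all x > 0 and all a ∈ [1,2]. Then for all x, y ≥ 0: ψ(x+y) − ψ(x) − ψ(y) ≥ (1/(2E))·x·y·ψ''(x+y). -/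
/-!
Put `s = x + y` with `x ≤ y`. The doubling condition gives `ψ'' ≥ ψ''(s) / E =: c` on `[s/2, s]`.
For `0 ≤ t ≤ x` we have `t ≤ s/2 ≤ y + t ≤ s`, so by monotonicity of `ψ'` and the mean value
theorem `ψ'(y + t) - ψ'(t) ≥ ψ'(y + t) - ψ'(s/2) ≥ c ((y - x)/2 + t)`. Integrating over `[0, x]`,
i.e. comparing the values at `0` and `x` of the monotone function
`t ↦ ψ(y + t) - ψ(t) - c t (y - x + t) / 2`, gives `ψ(x + y) - ψ(x) - ψ(y) + ψ(0) ≥ c x y / 2`.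
-/

open Set

theorem ConvexOn.monotoneOn_of_hasDerivWithinAt {S : Set ℝ} {f f' : ℝ → ℝ}
    (hf : ConvexOn ℝ S f) (hf' : ∀ x ∈ S, HasDerivWithinAt f (f' x) S x) :
    MonotoneOn f' S := by
  intro a ha b hb hab
  rcases hab.eq_or_lt with rfl | hlt
  · rfl
  exact (hf.le_slope_of_hasDerivWithinAt ha hb hlt (hf' a ha)).trans
    (hf.slope_le_of_hasDerivWithinAt ha hb hlt (hf' b hb))

theorem mul_sub_le_sub_of_le_hasDerivAt {g g' : ℝ → ℝ} {a b c : ℝ} (hab : a ≤ b)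
    (hg : ContinuousOn g (Icc a b)) (hg' : ∀ u ∈ Ioo a b, HasDerivAt g (g' u) u)
    (hc : ∀ u ∈ Ioo a b, c ≤ g' u) :
    c * (b - a) ≤ g b - g a := by
  rw [← interior_Icc] at hg' hc
  refine (convex_Icc a b).mul_sub_le_image_sub_of_le_deriv hg
    (fun u hu ↦ (hg' u hu).differentiableAt.differentiableWithinAt)
    (fun u hu ↦ (hg' u hu).deriv ▸ hc u hu) a (left_mem_Icc.2 hab) b (right_mem_Icc.2 hab) hab

theorem le_mul_of_doubling {g : ℝ → ℝ} {E : ℝ}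
    (hg : ∀ x : ℝ, 0 < x → ∀ a ∈ Icc (1 : ℝ) 2, g (a * x) ≤ E * g x)
    {s u : ℝ} (hs : 0 < s) (hu : u ∈ Icc (s / 2) s) :
    g s ≤ E * g u := by
  have hu₀ : 0 < u := by linarith [hu.1]
  have h := hg u hu₀ (s / u) ⟨(one_le_div hu₀).2 hu.2, (div_le_iff₀ hu₀).2 (by linarith [hu.1])⟩
  rwa [div_mul_cancel₀ _ hu₀.ne'] at h

theorem le_sub_sub_add_of_deriv_gap {f f' : ℝ → ℝ} {x y c : ℝ} (hx : 0 ≤ x) (hy : 0 ≤ y)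
    (hf : ∀ t ∈ Ici (0 : ℝ), HasDerivWithinAt f (f' t) (Ici 0) t)
    (hgap : ∀ t ∈ Ioo 0 x, c * ((y - x) / 2 + t) ≤ f' (y + t) - f' t) :
    c * (x * y) / 2 ≤ f (x + y) - f x - f y + f 0 := by
  set h : ℝ → ℝ := fun t ↦ f (y + t) - f t - c / 2 * (t * (y - x + t)) with h_def
  have hcont : ContinuousOn f (Ici 0) := fun t ht ↦ (hf t ht).continuousWithinAt
  have hf_at : ∀ t, 0 < t → HasDerivAt f (f' t) t := fun t ht ↦
    (hf t (le_of_lt ht)).hasDerivAt (Ici_mem_nhds ht)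
  have hmono : MonotoneOn h (Icc 0 x) := by
    refine monotoneOn_of_hasDerivWithinAt_nonneg (convex_Icc 0 x)
      (f' := fun t ↦ f' (y + t) - f' t - c * ((y - x) / 2 + t)) ?_ ?_ ?_
    · refine ((hcont.comp (continuousOn_const.add continuousOn_id) ?_).sub
        (hcont.mono Icc_subset_Ici_self)).sub (by fun_prop)
      exact fun t ht ↦ show (0 : ℝ) ≤ y + t by linarith [ht.1]
    · rw [interior_Icc]
      intro t ht
      have hpoly : HasDerivAt (fun t ↦ c / 2 * (t * (y - x + t))) (c * ((y - x) / 2 + t)) t :=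
        (((hasDerivAt_id' t).mul ((hasDerivAt_id' t).const_add (y - x))).const_mul
          (c / 2)).congr_deriv (by ring)
      exact (((hf_at (y + t) (by linarith [ht.1])).comp_const_add y t).sub
        (hf_at t ht.1) |>.sub hpoly).hasDerivWithinAt
    · rw [interior_Icc]
      exact fun t ht ↦ sub_nonneg.2 (hgap t ht)
  have hends := hmono (left_mem_Icc.2 hx) (right_mem_Icc.2 hx) hx
  simp only [h_def, add_zero, zero_mul, mul_zero, sub_zero, sub_add_cancel, add_comm y x] at hends
  linarith

theorem povzner_lower_of_le {f f' f'' : ℝ → ℝ} {E x y : ℝ}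
    (hconv : ConvexOn ℝ (Ici 0) f) (hf0 : f 0 = 0)
    (hf : ∀ t ∈ Ici (0 : ℝ), HasDerivWithinAt f (f' t) (Ici 0) t)
    (hf'_cont : ContinuousOn f' (Ici 0)) (hf' : ∀ t : ℝ, 0 < t → HasDerivAt f' (f'' t) t)
    (hE : 0 < E) (hdoub : ∀ x : ℝ, 0 < x → ∀ a ∈ Icc (1 : ℝ) 2, f'' (a * x) ≤ E * f'' x)
    (hx : 0 ≤ x) (hxy : x ≤ y) :
    (1 / (2 * E)) * (x * y * f'' (x + y)) ≤ f (x + y) - f x - f y := by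
  have hmono : MonotoneOn f' (Ici 0) := hconv.monotoneOn_of_hasDerivWithinAt hf
  have hgap : ∀ t ∈ Ioo 0 x, f'' (x + y) / E * ((y - x) / 2 + t) ≤ f' (y + t) - f' t := by
    rintro t ⟨ht0, htx⟩
    have hs : 0 < x + y := by linarith
    have hf''_ge : ∀ u ∈ Ioo ((x + y) / 2) (y + t), f'' (x + y) / E ≤ f'' u := fun u hu ↦
      (div_le_iff₀ hE).2 <| by
        rw [mul_comm]; exact le_mul_of_doubling hdoub hs ⟨hu.1.le, by linarith [hu.2]⟩
    calc f'' (x + y) / E * ((y - x) / 2 + t) = f'' (x + y) / E * (y + t - (x + y) / 2) := by ring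
      _ ≤ f' (y + t) - f' ((x + y) / 2) :=
        mul_sub_le_sub_of_le_hasDerivAt (by linarith)
          (hf'_cont.mono fun u hu ↦ show (0 : ℝ) ≤ u by linarith [hu.1])
          (fun u hu ↦ hf' u (by linarith [hu.1])) hf''_ge
      _ ≤ f' (y + t) - f' t :=
        sub_le_sub_left (hmono ht0.le (show (0 : ℝ) ≤ (x + y) / 2 by linarith) (by linarith)) _
  have h := le_sub_sub_add_of_deriv_gap hx (hx.trans hxy) hf hgap
  rw [hf0, add_zero] at h
  calc (1 / (2 * E)) * (x * y * f'' (x + y)) = f'' (x + y) / E * (x * y) / 2 := by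
        field_simp
    _ ≤ f (x + y) - f x - f y := h

theorem povzner_lower_general
    (ψ ψ' ψ'' : ℝ → ℝ)
    (hconv : ConvexOn ℝ (Set.Ici (0 : ℝ)) ψ)
    (hψ0 : ψ 0 = 0)
    (hderiv : ∀ x ∈ Set.Ici (0 : ℝ), HasDerivWithinAt ψ (ψ' x) (Set.Ici (0 : ℝ)) x)
    (hcont : ContinuousOn ψ' (Set.Ici (0 : ℝ)))
    (hderiv2 : ∀ x : ℝ, 0 < x → HasDerivAt ψ' (ψ'' x) x)
    (E : ℝ) (hE : 0 < E)
    (hdoub : ∀ x : ℝ, 0 < x → ∀ a ∈ Set.Icc (1 : ℝ) 2, ψ'' (a * x) ≤ E * ψ'' x)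
    (x y : ℝ) (hx : 0 ≤ x) (hy : 0 ≤ y) :
    (1 / (2 * E)) * (x * y * ψ'' (x + y)) ≤ ψ (x + y) - ψ x - ψ y := by
  wlog hxy : x ≤ y generalizing x y
  · have h := this y x hy hx (le_of_not_ge hxy)
    rwa [add_comm y x, mul_comm y x, sub_right_comm] at h
  exact povzner_lower_of_le hconv hψ0 hderiv hcont hderiv2 hE hdoub hx hxy

/-- Lower Povzner-type inequality for a convex `C¹` function `ψ : [0,∞) → [0,∞)`
with `ψ(0) = 0`, twice differentiable on `(0,∞)`, with
`ψ''(ax) ≤ E ψ''(x)` for `a ∈ [1,2]`: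
`ψ(x+y) − ψ(x) − ψ(y) ≥ (1/(2E)) x y ψ''(x+y)`. -/
theorem povzner_lower
    (ψ ψ' ψ'' : ℝ → ℝ)
    (hconv : ConvexOn ℝ (Set.Ici (0 : ℝ)) ψ)
    (hnonneg : ∀ x ∈ Set.Ici (0 : ℝ), 0 ≤ ψ x)
    (hψ0 : ψ 0 = 0)
    (hderiv : ∀ x ∈ Set.Ici (0 : ℝ), HasDerivWithinAt ψ (ψ' x) (Set.Ici (0 : ℝ)) x)
    (hcont : ContinuousOn ψ' (Set.Ici (0 : ℝ)))
    (hderiv2 : ∀ x : ℝ, 0 < x → HasDerivAt ψ' (ψ'' x) x)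
    (E : ℝ) (hE : 0 < E)
    (hdoub : ∀ x : ℝ, 0 < x → ∀ a ∈ Set.Icc (1 : ℝ) 2, ψ'' (a * x) ≤ E * ψ'' x)
    (x y : ℝ) (hx : 0 ≤ x) (hy : 0 ≤ y) :
    (1 / (2 * E)) * (x * y * ψ'' (x + y)) ≤ ψ (x + y) - ψ x - ψ y :=
  povzner_lower_general ψ ψ' ψ'' hconv hψ0 hderiv hcont hderiv2 E hE hdoub x y hx hy
end

section
/- Let N ≥ 2, let v, v_* ∈ ℝ^N with u = v − v_*, w = v + v_*, let λ ∈ (0,1] and let ω be a unit vector; set v' = (w + λ|u|ω)/2 and v'_* = (w − λ|u|ω)/2. Then: (i) |v'|² + |v'_*|² = (|w|² + λ²|u|²)/2, and consequently λ²·(|v|²+|v_*|²) ≤ |v'|² + |v'_*|² ≤ |v|² + |v_*|²; and (ii) if moreover w ≠ 0, then |v'|²·|v'_*|² ≥ (1/4)·(1 − ⟨w,ω⟩²/|w|²)·(|v'|² + |v'_*|²)². -/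
open scoped RealInnerProductSpace


private lemma aux_lower (W U V Vs lam : ℝ) (hpar : W + U = 2 * V + 2 * Vs)
    (hW : 0 ≤ W) (hl : lam ^ 2 ≤ 1) :
    lam ^ 2 * (V + Vs) ≤ (W + lam ^ 2 * U) / 2 := by nlinarith

private lemma aux_upper (W U V Vs lam : ℝ) (hpar : W + U = 2 * V + 2 * Vs)
    (hU : 0 ≤ U) (hl : lam ^ 2 ≤ 1) :
    (W + lam ^ 2 * U) / 2 ≤ V + Vs := by nlinarith

private lemma aux_prod (W a s : ℝ) :
    1 / 4 * (W - s ^ 2) *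
        ((W + 2 * a * s + a ^ 2) / 4 + (W - 2 * a * s + a ^ 2) / 4) ^ 2 ≤
      (W + 2 * a * s + a ^ 2) / 4 * ((W - 2 * a * s + a ^ 2) / 4) * W := by
  nlinarith [sq_nonneg (s * (W - a ^ 2))]

/-- Elementary identities and inequalities for the post-collisional velocities
`v' = (w + λ|u|ω)/2`, `v'_* = (w − λ|u|ω)/2`:
(i) `|v'|² + |v'_*|² = (|w|² + λ²|u|²)/2`, hence
`λ²(|v|²+|v_*|²) ≤ |v'|² + |v'_*|² ≤ |v|² + |v_*|²`;
(ii) if `w ≠ 0`, `|v'|²|v'_*|² ≥ (1/4)(1 − ⟨w,ω⟩²/|w|²)(|v'|²+|v'_*|²)²`. -/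
theorem post_collisional_energy
    (N : ℕ) (hN : 2 ≤ N)
    (v vs u w : EuclideanSpace ℝ (Fin N))
    (hu : u = v - vs) (hw : w = v + vs)
    (lam : ℝ) (hlam0 : 0 < lam) (hlam1 : lam ≤ 1)
    (ω : EuclideanSpace ℝ (Fin N)) (hω : ‖ω‖ = 1)
    (v' vs' : EuclideanSpace ℝ (Fin N))
    (hv' : v' = (2 : ℝ)⁻¹ • (w + (lam * ‖u‖) • ω))
    (hvs' : vs' = (2 : ℝ)⁻¹ • (w - (lam * ‖u‖) • ω)) :
    (‖v'‖ ^ 2 + ‖vs'‖ ^ 2 = (‖w‖ ^ 2 + lam ^ 2 * ‖u‖ ^ 2) / 2 ∧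
      lam ^ 2 * (‖v‖ ^ 2 + ‖vs‖ ^ 2) ≤ ‖v'‖ ^ 2 + ‖vs'‖ ^ 2 ∧
      ‖v'‖ ^ 2 + ‖vs'‖ ^ 2 ≤ ‖v‖ ^ 2 + ‖vs‖ ^ 2) ∧
    (w ≠ 0 →
      (1 / 4) * (1 - ⟪w, ω⟫ ^ 2 / ‖w‖ ^ 2) * (‖v'‖ ^ 2 + ‖vs'‖ ^ 2) ^ 2
        ≤ ‖v'‖ ^ 2 * ‖vs'‖ ^ 2) := by
  set a : ℝ := lam * ‖u‖ with ha
  set s : ℝ := ⟪w, ω⟫ with hs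
  -- norm of scaled vector
  have hsq : ∀ x : EuclideanSpace ℝ (Fin N),
      ‖(2 : ℝ)⁻¹ • x‖ ^ 2 = ‖x‖ ^ 2 / 4 := by
    intro x
    rw [norm_smul]
    simp [abs_of_pos]
    ring
  have haω : ‖a • ω‖ ^ 2 = a ^ 2 := by
    rw [norm_smul, hω]
    simp [sq_abs]
  have hv'2 : ‖v'‖ ^ 2 = (‖w‖ ^ 2 + 2 * a * s + a ^ 2) / 4 := by
    rw [hv', hsq, norm_add_sq_real, haω, real_inner_smul_right]
    ring
  have hvs'2 : ‖vs'‖ ^ 2 = (‖w‖ ^ 2 - 2 * a * s + a ^ 2) / 4 := by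
    rw [hvs', hsq, norm_sub_sq_real, haω, real_inner_smul_right]
    ring
  have hpar : ‖w‖ ^ 2 + ‖u‖ ^ 2 = 2 * ‖v‖ ^ 2 + 2 * ‖vs‖ ^ 2 := by
    rw [hw, hu, norm_add_sq_real, norm_sub_sq_real]
    ring
  have ha2 : a ^ 2 = lam ^ 2 * ‖u‖ ^ 2 := by rw [ha]; ring
  have hlamsq : lam ^ 2 ≤ 1 := by nlinarith
  have hunn : (0:ℝ) ≤ ‖u‖ ^ 2 := sq_nonneg _
  have hwnn : (0:ℝ) ≤ ‖w‖ ^ 2 := sq_nonneg _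
  have hsum : ‖v'‖ ^ 2 + ‖vs'‖ ^ 2 = (‖w‖ ^ 2 + lam ^ 2 * ‖u‖ ^ 2) / 2 := by
    rw [hv'2, hvs'2, ha2]; ring
  refine ⟨⟨hsum, ?_, ?_⟩, ?_⟩
  · rw [hsum]; exact aux_lower _ _ _ _ _ hpar hwnn hlamsq
  · rw [hsum]; exact aux_upper _ _ _ _ _ hpar hunn hlamsq
  · intro hwne
    have hW : (0:ℝ) < ‖w‖ ^ 2 := pow_pos (norm_pos_iff.mpr hwne) 2
    rw [show (1 - s ^ 2 / ‖w‖ ^ 2) = (‖w‖ ^ 2 - s ^ 2) / ‖w‖ ^ 2 by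
      field_simp]
    rw [show (1 / 4) * ((‖w‖ ^ 2 - s ^ 2) / ‖w‖ ^ 2) * (‖v'‖ ^ 2 + ‖vs'‖ ^ 2) ^ 2
        = ((1 / 4) * (‖w‖ ^ 2 - s ^ 2) * (‖v'‖ ^ 2 + ‖vs'‖ ^ 2) ^ 2) / ‖w‖ ^ 2 by
      ring]
    rw [div_le_iff₀ hW]
    rw [hv'2, hvs'2]
    exact aux_prod _ _ _
end

section
/- Let N ≥ 1 and let g : ℝ^N → [0,∞) be integrable with ρ₀ = ∫ g(v) dv and ρ₁ = ∫ g(v)|v| dv finite. Then for every r > 0 and every K > 0 there exists a > 0 such that the function h(v) = K·exp(−a|v|^{3/2}) satisfies Δh(v) − h(v)·∫_{ℝ^N} g(v_*)|v − v_*| dv_* ≥ 0 for all v with |v| > r. -/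
open MeasureTheory

noncomputable section

/-- The Laplacian in the velocity variable. -/
def laplacian {N : ℕ} (f : EuclideanSpace ℝ (Fin N) → ℝ)
    (v : EuclideanSpace ℝ (Fin N)) : ℝ :=
  ∑ i : Fin N, iteratedFDeriv ℝ 2 f v ![EuclideanSpace.single i 1, EuclideanSpace.single i 1]

/-! For a radial profile, `Δ φ(|v|²) = 2Nφ' + 4|v|²φ''`; for the stretched exponential this gives
`Δh = h · (9/4 a²|v| - 3/4 (2N - 1) a |v|^{-1/2})`, while the triangle inequality bounds the loss
term by `h · (ρ₀|v| + ρ₁)`. On `|v| > r` both `ρ₀|v| + ρ₁` and the `|v|^{-1/2}` term are at most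
linear in `a` times `|v|`, so the term `9/4 a²|v|` dominates once `a` is large. -/

open Filter Topology

theorem HasDerivAt.hasFDerivAt_comp_norm_sq {F : Type*} [NormedAddCommGroup F]
    [InnerProductSpace ℝ F] {φ : ℝ → ℝ} {φ' : ℝ} {w : F} (hφ : HasDerivAt φ φ' (‖w‖ ^ 2)) :
    HasFDerivAt (fun w => φ (‖w‖ ^ 2)) ((2 * φ') • innerSL ℝ w) w := by
  refine (hφ.comp_hasFDerivAt w (hasStrictFDerivAt_norm_sq w).hasFDerivAt).congr_fderiv ?_
  ext u; simp; ring

theorem laplacian_comp_norm_sq {N : ℕ} {φ φ' : ℝ → ℝ} {φ'' : ℝ} {v : EuclideanSpace ℝ (Fin N)}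
    (hφ : ∀ᶠ t in 𝓝 (‖v‖ ^ 2), HasDerivAt φ (φ' t) t) (hφ' : HasDerivAt φ' φ'' (‖v‖ ^ 2)) :
    laplacian (fun w => φ (‖w‖ ^ 2)) v = 2 * N * φ' (‖v‖ ^ 2) + 4 * ‖v‖ ^ 2 * φ'' := by
  -- `innerSL ℝ` is typed as conjugate-linear; over `ℝ` it is linear by `rfl`, as `HasFDerivAt` needs.
  let B : EuclideanSpace ℝ (Fin N) →L[ℝ] EuclideanSpace ℝ (Fin N) →L[ℝ] ℝ := innerSL ℝ
  have hnorm_sq : Continuous fun w : EuclideanSpace ℝ (Fin N) => ‖w‖ ^ 2 := by fun_prop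
  have hfderiv : fderiv ℝ (fun w => φ (‖w‖ ^ 2)) =ᶠ[𝓝 v] fun w => (2 * φ' (‖w‖ ^ 2)) • B w := by
    filter_upwards [hnorm_sq.continuousAt.eventually hφ] with w hw
    exact hw.hasFDerivAt_comp_norm_sq.fderiv
  have hsecond : HasFDerivAt (fun w => (2 * φ' (‖w‖ ^ 2)) • B w) _ v :=
    (hφ'.hasFDerivAt_comp_norm_sq.const_mul 2).smul B.hasFDerivAt
  have hdiag : ∀ i, iteratedFDeriv ℝ 2 (fun w => φ (‖w‖ ^ 2)) v
      ![EuclideanSpace.single i 1, EuclideanSpace.single i 1] = 2 * φ' (‖v‖ ^ 2) + 4 * φ'' * v i ^ 2 := by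
    intro i
    rw [iteratedFDeriv_two_apply, hfderiv.fderiv_eq, hsecond.fderiv]
    have hB : ∀ x y, B x y = inner ℝ x y := fun _ _ => rfl
    simp [hB, EuclideanSpace.inner_single_right]
    ring
  simp only [laplacian, hdiag, Finset.sum_add_distrib, ← Finset.mul_sum,
    ← EuclideanSpace.real_norm_sq_eq, Finset.sum_const, Finset.card_univ, Fintype.card_fin, nsmul_eq_mul]
  ring

theorem laplacian_stretched_exp {N : ℕ} (a K : ℝ) {v : EuclideanSpace ℝ (Fin N)} (hv : v ≠ 0) :
    laplacian (fun w => K * Real.exp (-a * ‖w‖ ^ ((3 : ℝ) / 2))) v =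
      K * Real.exp (-a * ‖v‖ ^ ((3 : ℝ) / 2)) *
        (9 / 4 * a ^ 2 * ‖v‖ - 3 / 4 * (2 * N - 1) * a / √‖v‖) := by
  set φ : ℝ → ℝ := fun t => K * Real.exp (-a * t ^ ((3 : ℝ) / 4))
  set ψ : ℝ → ℝ := fun t => -(3 / 4) * a * t ^ (-(1 : ℝ) / 4)
  have hφ : ∀ t : ℝ, 0 < t → HasDerivAt φ (φ t * ψ t) t := by
    intro t ht
    refine ((((Real.hasDerivAt_rpow_const (p := 3 / 4) (Or.inl ht.ne')).const_mul (-a)).exp).const_mul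
      K).congr_deriv ?_
    norm_num [φ, ψ]; ring
  have hψ : ∀ t : ℝ, 0 < t → HasDerivAt ψ (3 / 16 * a * t ^ (-(5 : ℝ) / 4)) t := by
    intro t ht
    refine ((Real.hasDerivAt_rpow_const (p := -1 / 4) (Or.inl ht.ne')).const_mul
      (-(3 / 4) * a)).congr_deriv ?_
    norm_num; ring
  have hprofile : (fun w : EuclideanSpace ℝ (Fin N) => K * Real.exp (-a * ‖w‖ ^ ((3 : ℝ) / 2))) =
      fun w => φ (‖w‖ ^ 2) := by
    ext w
    simp only [φ, ← Real.rpow_natCast_mul (norm_nonneg w)]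
    norm_num
  have hs : 0 < ‖v‖ ^ 2 := by positivity
  rw [hprofile, laplacian_comp_norm_sq (eventually_gt_nhds hs |>.mono hφ)
    ((hφ _ hs).mul (hψ _ hs))]
  obtain ⟨x, hx, hvx⟩ : ∃ x : ℝ, 0 < x ∧ ‖v‖ = x ^ 2 :=
    ⟨√‖v‖, by positivity, (Real.sq_sqrt (norm_nonneg v)).symm⟩
  simp only [φ, ψ, hvx, ← pow_mul, Real.sqrt_sq hx.le, ← Real.rpow_natCast_mul hx.le]
  norm_num [Real.rpow_neg_one]
  field_simp
  ring

theorem integral_mul_norm_sub_le {E : Type*} [SeminormedAddCommGroup E] [MeasurableSpace E]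
    {μ : Measure E} {g : E → ℝ} (hg0 : ∀ w, 0 ≤ g w) (hg : Integrable g μ)
    (hg1 : Integrable (fun w => g w * ‖w‖) μ) (v : E) :
    ∫ w, g w * ‖v - w‖ ∂μ ≤ (∫ w, g w ∂μ) * ‖v‖ + ∫ w, g w * ‖w‖ ∂μ := by
  rw [← integral_mul_const, ← integral_add (hg.mul_const _) hg1]
  refine integral_mono_of_nonneg (ae_of_all _ fun w => ?_) ((hg.mul_const _).add hg1)
    (ae_of_all _ fun w => ?_)
  · exact mul_nonneg (hg0 w) (norm_nonneg _)
  · simpa only [mul_add] using mul_le_mul_of_nonneg_left (norm_sub_le v w) (hg0 w)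

theorem exists_pos_forall_lt_affine_le (N : ℕ) {ρ₀ ρ₁ r : ℝ} (hρ₀ : 0 ≤ ρ₀) (hρ₁ : 0 ≤ ρ₁)
    (hr : 0 < r) :
    ∃ a > 0, ∀ s, r < s → ρ₀ * s + ρ₁ ≤ 9 / 4 * a ^ 2 * s - 3 / 4 * (2 * N - 1) * a / √s := by
  obtain ⟨C, hC⟩ : ∃ C, C = ρ₀ + ρ₁ / r + 3 / 2 * N / (r * √r) := ⟨_, rfl⟩
  have hC0 : 0 ≤ C := by rw [hC]; positivity
  -- Any `a ≥ 1` with `C ≤ 9/4 a` works: then `ρ₀ s + ρ₁ + 3/4 (2N - 1) a / √s ≤ C a s ≤ 9/4 a² s`.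
  refine ⟨1 + 4 / 9 * C, by positivity, fun s hs => ?_⟩
  obtain ⟨a, ha⟩ : ∃ a, a = 1 + 4 / 9 * C := ⟨_, rfl⟩
  rw [← ha]
  have hs0 : 0 < s := hr.trans hs
  have hρ₁s : ρ₁ ≤ ρ₁ / r * s := by
    rw [div_mul_eq_mul_div, le_div_iff₀ hr]; exact mul_le_mul_of_nonneg_left hs.le hρ₁
  have hsqrt : 1 / √s ≤ s / (r * √r) := by
    rw [div_le_div_iff₀ (by positivity) (by positivity), one_mul]
    nlinarith [Real.sqrt_le_sqrt hs.le, Real.sqrt_nonneg r]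
  have hN : 3 / 4 * (2 * N - 1) * a / √s ≤ 3 / 2 * N / (r * √r) * a * s := by
    have : 0 ≤ 3 / 4 * a / √s := by rw [ha]; positivity
    calc 3 / 4 * (2 * N - 1) * a / √s = 3 / 2 * N * a * (1 / √s) - 3 / 4 * a / √s := by ring
      _ ≤ 3 / 2 * N * a * (s / (r * √r)) := by
          have : 0 ≤ 3 / 2 * N * a := by rw [ha]; positivity
          nlinarith [mul_le_mul_of_nonneg_left hsqrt this]
      _ = 3 / 2 * N / (r * √r) * a * s := by ring
  have haC : C * a * s ≤ 9 / 4 * a ^ 2 * s := by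
    have : C ≤ 9 / 4 * a := by linarith
    nlinarith [mul_le_mul_of_nonneg_right this (by rw [ha]; positivity : 0 ≤ a * s)]
  have ha1 : 1 ≤ a := by linarith
  calc ρ₀ * s + ρ₁ ≤ (ρ₀ + ρ₁ / r) * a * s := by
        nlinarith [mul_le_mul_of_nonneg_right ha1 (by positivity : 0 ≤ (ρ₀ + ρ₁ / r) * s)]
    _ = C * a * s - 3 / 2 * N / (r * √r) * a * s := by rw [hC]; ring
    _ ≤ 9 / 4 * a ^ 2 * s - 3 / 4 * (2 * N - 1) * a / √s := by linarith

theorem stretched_exponential_subsolution_general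
    (N : ℕ) (g : EuclideanSpace ℝ (Fin N) → ℝ)
    (hg0 : ∀ v, 0 ≤ g v)
    (hgint : Integrable g volume)
    (hg1 : Integrable (fun v => g v * ‖v‖) volume)
    (r K : ℝ) (hr : 0 < r) (hK : 0 < K) :
    ∃ a : ℝ, 0 < a ∧
      ∀ v : EuclideanSpace ℝ (Fin N), r < ‖v‖ →
        0 ≤ laplacian (fun w => K * Real.exp (-a * ‖w‖ ^ ((3 : ℝ) / 2))) v
            - (K * Real.exp (-a * ‖v‖ ^ ((3 : ℝ) / 2))) *
                ∫ vs : EuclideanSpace ℝ (Fin N), g vs * ‖v - vs‖ := by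
  obtain ⟨a, ha, hrate⟩ := exists_pos_forall_lt_affine_le N (integral_nonneg hg0)
    (integral_nonneg fun w => mul_nonneg (hg0 w) (norm_nonneg w)) hr
  refine ⟨a, ha, fun v hv => ?_⟩
  rw [laplacian_stretched_exp a K (norm_pos_iff.mp (hr.trans hv)), ← mul_sub]
  refine mul_nonneg (by positivity) (sub_nonneg.mpr ?_)
  exact (integral_mul_norm_sub_le hg0 hgint hg1 v).trans (hrate _ hv)

/-- The stretched exponential `h(v) = K exp(−a|v|^{3/2})` is a subsolution of
`Δh − Q⁻(g,h) = 0` outside the ball of radius `r`: for every `r, K > 0` there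
is `a > 0` such that `Δh(v) − h(v)∫g(v_*)|v−v_*| dv_* ≥ 0` for `|v| > r`. -/
theorem stretched_exponential_subsolution
    (N : ℕ) (hN : 1 ≤ N) (g : EuclideanSpace ℝ (Fin N) → ℝ)
    (hg0 : ∀ v, 0 ≤ g v)
    (hgint : Integrable g volume)
    (hg1 : Integrable (fun v => g v * ‖v‖) volume)
    (r K : ℝ) (hr : 0 < r) (hK : 0 < K) :
    ∃ a : ℝ, 0 < a ∧
      ∀ v : EuclideanSpace ℝ (Fin N), r < ‖v‖ →
        0 ≤ laplacian (fun w => K * Real.exp (-a * ‖w‖ ^ ((3 : ℝ) / 2))) v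
            - (K * Real.exp (-a * ‖v‖ ^ ((3 : ℝ) / 2))) *
                ∫ vs : EuclideanSpace ℝ (Fin N), g vs * ‖v - vs‖ :=
  stretched_exponential_subsolution_general N g hg0 hgint hg1 r K hr hK
end
end
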